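/- If every asymptotic representation of a separable C*-algebra A taking values in D is asymptotically equivalent to zero (i.e. lim_{t→∞} φ_t(a) = 0 for all a ∈ A), then for any separable C*-algebra B the seminorm ‖·‖_{D,0} on A ⊙ B vanishes identically, and hence A ⊗_D B = A ⊗_min B. -/

import Mathlib

open Filter Topology
open scoped TensorProduct

/-- An asymptotic homomorphism (asymptotic representation when `D ⊆ 𝕃(H)`)
from `A` to `D`. -/
structure AsympHom (A D : Type*) [NormedRing A] [StarRing A] [NormedAlgebra ℂ A]
    [NormedRing D] [StarRing D] [NormedAlgebra ℂ D] where
  toFun : ℝ → A → D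
  cont : ∀ a : A, Continuous fun t => toFun t a
  lin_lim : ∀ (a b : A) (lam : ℂ),
    Tendsto (fun t => toFun t (a + lam • b) - toFun t a - lam • toFun t b) atTop (nhds 0)
  star_lim : ∀ a : A, Tendsto (fun t => toFun t (star a) - star (toFun t a)) atTop (nhds 0)
  mul_lim : ∀ a b : A,
    Tendsto (fun t => toFun t (a * b) - toFun t a * toFun t b) atTop (nhds 0)


section Aux

private lemma exists_interp (P : ℝ → ℝ) (hP : ∀ C T : ℝ, ∃ t, T ≤ t ∧ C ≤ P t) :
    ∃ ρ : ℝ → ℝ, Continuous ρ ∧ (∀ t, 1 ≤ ρ t) ∧ Tendsto ρ atTop atTop ∧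
      ∀ T, ∃ t, T ≤ t ∧ ρ t ≤ P t := by
  classical
  let u : ℕ → ℝ := fun n =>
    Nat.rec (hP 1 0).choose (fun k uk => (hP ((k : ℝ) + 2) (uk + 1)).choose) n
  have huS : ∀ k, u (k + 1) = (hP ((k : ℝ) + 2) (u k + 1)).choose := fun k => rfl
  have hgap : ∀ k, u k + 1 ≤ u (k + 1) := by
    intro k
    have := (hP ((k : ℝ) + 2) (u k + 1)).choose_spec.1
    rw [huS k]; exact this
  have hPk : ∀ k : ℕ, (k : ℝ) + 1 ≤ P (u k) := by
    intro k
    cases k with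
    | zero =>
      have := (hP 1 0).choose_spec.2
      have h0 : u 0 = (hP 1 0).choose := rfl
      rw [h0]
      simpa using this
    | succ k =>
      have := (hP ((k : ℝ) + 2) (u k + 1)).choose_spec.2
      rw [huS k]; push_cast; linarith
  have hmono : Monotone u := monotone_nat_of_le_succ (fun k => by linarith [hgap k])
  have hlin : ∀ k : ℕ, u 0 + k ≤ u k := by
    intro k
    induction k with
    | zero => simp
    | succ k ih => have := hgap k; push_cast; linarith
  let g : ℕ → ℝ → ℝ := fun k t => max 0 (min 1 (t - u k))
  have hg0 : ∀ k t, t ≤ u k → g k t = 0 := by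
    intro k t ht
    have : min 1 (t - u k) ≤ 0 := le_trans (min_le_right _ _) (by linarith)
    exact max_eq_left this
  have hg1 : ∀ k t, u k + 1 ≤ t → g k t = 1 := by
    intro k t ht
    have h1 : min 1 (t - u k) = 1 := min_eq_left (by linarith)
    simp only [g, h1]
    norm_num
  have hgnn : ∀ k t, 0 ≤ g k t := fun k t => le_max_left _ _
  have hgmono : ∀ k, Monotone (g k) := by
    intro k s t hst
    exact max_le_max le_rfl (min_le_min le_rfl (by linarith))
  have hgcont : ∀ k, Continuous (g k) :=
    fun k => continuous_const.max (continuous_const.min (continuous_id.sub continuous_const))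
  have hbig : ∀ t (k : ℕ), t ≤ u 0 + k → g k t = 0 := fun t k h => hg0 k t (h.trans (hlin k))
  have hsupp : ∀ t : ℝ, ∀ k ∉ Finset.range (⌈t - u 0⌉₊ + 1), g k t = 0 := by
    intro t k hk
    simp only [Finset.mem_range, not_lt] at hk
    have h1 : t - u 0 ≤ (⌈t - u 0⌉₊ : ℝ) := Nat.le_ceil _
    have h2 : ((⌈t - u 0⌉₊ + 1 : ℕ) : ℝ) ≤ (k : ℝ) := by exact_mod_cast hk
    apply hbig
    push_cast at h2 ⊢
    linarith
  have hsum : ∀ t, Summable (fun k => g k t) := fun t =>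
    summable_of_ne_finset_zero (hsupp t)
  let ρ : ℝ → ℝ := fun t => 1 + ∑' k, g k t
  have hval : ∀ m : ℕ, ρ (u m) = 1 + m := by
    intro m
    have h1 : ∑' k, g k (u m) = ∑ k ∈ Finset.range m, g k (u m) := by
      apply tsum_eq_sum
      intro k hk
      simp only [Finset.mem_range, not_lt] at hk
      exact hg0 k (u m) (hmono hk)
    have h2 : ∀ k ∈ Finset.range m, g k (u m) = 1 := by
      intro k hk
      simp only [Finset.mem_range] at hk
      exact hg1 k (u m) (le_trans (hgap k) (hmono hk))
    simp only [ρ, h1, Finset.sum_congr rfl h2, Finset.sum_const, Finset.card_range,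
      nsmul_eq_mul, mul_one]
  have hρ1 : ∀ t, 1 ≤ ρ t := by
    intro t
    have : 0 ≤ ∑' k, g k t := tsum_nonneg (fun k => hgnn k t)
    simp only [ρ]; linarith
  have hρmono : Monotone ρ := by
    intro s t hst
    have : ∑' k, g k s ≤ ∑' k, g k t :=
      Summable.tsum_le_tsum (fun k => hgmono k hst) (hsum s) (hsum t)
    simp only [ρ]; linarith
  have hρcont : Continuous ρ := by
    rw [continuous_iff_continuousAt]
    intro x
    set N : ℕ := ⌈x + 1 - u 0⌉₊ with hN
    have hxN : x < u N := by
      have h1 : x + 1 - u 0 ≤ (N : ℝ) := Nat.le_ceil _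
      have := hlin N
      linarith
    have heq : ∀ t ∈ Set.Iio (u N), (1 + ∑ k ∈ Finset.range N, g k t) = ρ t := by
      intro t ht
      simp only [Set.mem_Iio] at ht
      have : ∑' k, g k t = ∑ k ∈ Finset.range N, g k t := by
        apply tsum_eq_sum
        intro k hk
        simp only [Finset.mem_range, not_lt] at hk
        exact hg0 k t (le_of_lt (lt_of_lt_of_le ht (hmono hk)))
      simp only [ρ, this]
    have hcf : ContinuousAt (fun t => 1 + ∑ k ∈ Finset.range N, g k t) x := by
      apply Continuous.continuousAt
      exact continuous_const.add (continuous_finset_sum _ (fun k _ => hgcont k))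
    exact hcf.congr (eventuallyEq_of_mem (Iio_mem_nhds hxN) heq)
  have hρtop : Tendsto ρ atTop atTop := by
    rw [tendsto_atTop]
    intro b
    filter_upwards [eventually_ge_atTop (u ⌈b⌉₊)] with t ht
    have h1 : ρ (u ⌈b⌉₊) ≤ ρ t := hρmono ht
    have h2 : ρ (u ⌈b⌉₊) = 1 + ⌈b⌉₊ := hval _
    have h3 : b ≤ (⌈b⌉₊ : ℝ) := Nat.le_ceil _
    linarith
  refine ⟨ρ, hρcont, hρ1, hρtop, ?_⟩
  intro T
  refine ⟨u ⌈T - u 0⌉₊, ?_, ?_⟩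
  · have h1 : T - u 0 ≤ (⌈T - u 0⌉₊ : ℝ) := Nat.le_ceil _
    have := hlin ⌈T - u 0⌉₊
    linarith
  · rw [hval]
    have := hPk ⌈T - u 0⌉₊
    linarith

/-- The family constant in the algebra variable, given by a path `d` tending to `0`,
is an asymptotic homomorphism. -/
private noncomputable def constAH (A : Type*) {D : Type*}
    [NormedRing A] [StarRing A] [NormedAlgebra ℂ A]
    [NormedRing D] [StarRing D] [CStarRing D] [NormedAlgebra ℂ D]
    (d : ℝ → D) (hc : Continuous d) (h0 : Tendsto d atTop (nhds 0)) :
    AsympHom A D where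
  toFun := fun t _ => d t
  cont := fun _ => hc
  lin_lim := by
    intro a b lam
    have h : Tendsto (fun t => -(lam • d t)) atTop (nhds 0) := by
      have := (h0.const_smul lam).neg
      simpa using this
    simpa [sub_sub, ← neg_add] using h
  star_lim := by
    intro a
    have hst : Tendsto (fun t => star (d t)) atTop (nhds 0) := by
      have := (continuous_star.tendsto (0 : D)).comp h0
      simpa [Function.comp_def] using this
    simpa using h0.sub hst
  mul_lim := by
    intro a b
    have := h0.sub (h0.mul h0)
    simpa using this

private lemma exists_repr {A B : Type*}
    [NormedRing A] [NormedAlgebra ℂ A] [NormedRing B] [NormedAlgebra ℂ B]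
    (c : A ⊗[ℂ] B) : ∃ (n : ℕ) (a : Fin n → A) (b : Fin n → B), c = ∑ i, a i ⊗ₜ[ℂ] b i := by
  induction c with
  | zero => exact ⟨0, Fin.elim0, Fin.elim0, by simp⟩
  | tmul x y => exact ⟨1, fun _ => x, fun _ => y, by simp⟩
  | add c₁ c₂ ih₁ ih₂ =>
    obtain ⟨n₁, a₁, b₁, h₁⟩ := ih₁
    obtain ⟨n₂, a₂, b₂, h₂⟩ := ih₂
    refine ⟨n₁ + n₂, Fin.append a₁ a₂, Fin.append b₁ b₂, ?_⟩
    rw [h₁, h₂, Fin.sum_univ_add]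
    simp [Fin.append_left, Fin.append_right]

end Aux

/-- If every asymptotic representation of `A` with values in `D` is asymptotically
equivalent to zero, then for every `B` the seminorm `‖·‖_{D,0}` on `A ⊙ B` (the supremum
over pairs `(φ, ψ)` of asymptotic representations of the asymptotic norms
`limsup_t ν(Σᵢ φ_t(aᵢ) ⊗ ψ_t(bᵢ))`, the norm `ν` being the minimal C*-norm on `D ⊙ D`)
vanishes identically; hence `‖·‖_D = max(‖·‖_min, ‖·‖_{D,0}) = ‖·‖_min`, i.e.
`A ⊗_D B = A ⊗_min B`. -/
theorem tensor_D_eq_min_of_asymptotically_trivial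
    {A B D : Type*}
    [NormedRing A] [StarRing A] [CStarRing A] [NormedAlgebra ℂ A] [StarModule ℂ A]
    [NormedRing B] [StarRing B] [CStarRing B] [NormedAlgebra ℂ B] [StarModule ℂ B]
    [NormedRing D] [StarRing D] [CStarRing D] [NormedAlgebra ℂ D] [StarModule ℂ D]
    -- `ν` is the (minimal) C*-norm on `D ⊙ D`, used to measure the images:
    (ν : D ⊗[ℂ] D → ℝ)
    (hν_nonneg : ∀ x, 0 ≤ ν x)
    (hν_add : ∀ x y, ν (x + y) ≤ ν x + ν y)
    (hν_cross : ∀ x y : D, ν (x ⊗ₜ[ℂ] y) = ‖x‖ * ‖y‖)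
    -- every asymptotic representation of `A` in `D` is asymptotically zero:
    (htriv : ∀ (φ : AsympHom A D) (a : A), Tendsto (fun t => φ.toFun t a) atTop (nhds 0))
    -- the seminorm `‖·‖_{D,0}` on `A ⊙ B`:
    (p0 : A ⊗[ℂ] B → ℝ)
    (hp0 : ∀ c, p0 c = sSup {r : ℝ |
      ∃ (φ : AsympHom A D) (ψ : AsympHom B D) (n : ℕ) (a : Fin n → A) (b : Fin n → B),
        c = ∑ i, a i ⊗ₜ[ℂ] b i ∧
        r = limsup (fun t => ν (∑ i, φ.toFun t (a i) ⊗ₜ[ℂ] ψ.toFun t (b i))) atTop})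
    -- the minimal tensor norm on `A ⊙ B`:
    (pmin : A ⊗[ℂ] B → ℝ) (hpmin_nonneg : ∀ c, 0 ≤ pmin c) :
    (∀ c : A ⊗[ℂ] B, p0 c = 0) ∧
    (∀ c : A ⊗[ℂ] B, max (pmin c) (p0 c) = pmin c) := by
  classical
  have hν0 : ν (0 : D ⊗[ℂ] D) = 0 := by
    have := hν_cross 0 0
    simpa using this
  have hνsum : ∀ (m : ℕ) (x y : Fin m → D),
      ν (∑ i, x i ⊗ₜ[ℂ] y i) ≤ ∑ i, ‖x i‖ * ‖y i‖ := by
    intro m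
    induction m with
    | zero => intro x y; simp [hν0]
    | succ m ih =>
      intro x y
      rw [Fin.sum_univ_succ (f := fun i => x i ⊗ₜ[ℂ] y i),
        Fin.sum_univ_succ (f := fun i => ‖x i‖ * ‖y i‖)]
      calc ν (x 0 ⊗ₜ[ℂ] y 0 + ∑ i : Fin m, x i.succ ⊗ₜ[ℂ] y i.succ)
          ≤ ν (x 0 ⊗ₜ[ℂ] y 0) + ν (∑ i : Fin m, x i.succ ⊗ₜ[ℂ] y i.succ) := hν_add _ _
        _ ≤ ‖x 0‖ * ‖y 0‖ + ∑ i : Fin m, ‖x i.succ‖ * ‖y i.succ‖ := by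
            rw [hν_cross]
            exact add_le_add le_rfl (ih _ _)
  have key : ∀ c : A ⊗[ℂ] B, p0 c = 0 := by
    intro c
    rw [hp0 c]
    set S : Set ℝ := {r : ℝ |
      ∃ (φ : AsympHom A D) (ψ : AsympHom B D) (n : ℕ) (a : Fin n → A) (b : Fin n → B),
        c = ∑ i, a i ⊗ₜ[ℂ] b i ∧
        r = limsup (fun t => ν (∑ i, φ.toFun t (a i) ⊗ₜ[ℂ] ψ.toFun t (b i))) atTop}
      with hSdef
    -- `0` belongs to `S`, via the zero asymptotic representations
    have h0S : (0 : ℝ) ∈ S := by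
      obtain ⟨n, a, b, hc⟩ := exists_repr c
      refine ⟨constAH A (fun _ => 0) continuous_const tendsto_const_nhds,
        constAH B (fun _ => 0) continuous_const tendsto_const_nhds, n, a, b, hc, ?_⟩
      have hfun : (fun t : ℝ => ν (∑ i : Fin n,
          (constAH A (fun _ => (0:D)) continuous_const tendsto_const_nhds).toFun t (a i) ⊗ₜ[ℂ]
          (constAH B (fun _ => (0:D)) continuous_const tendsto_const_nhds).toFun t (b i)))
          = fun _ => (0 : ℝ) := by
        funext t
        have : ∀ i : Fin n,
            (constAH A (fun _ => (0:D)) continuous_const tendsto_const_nhds).toFun t (a i) ⊗ₜ[ℂ]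
            (constAH B (fun _ => (0:D)) continuous_const tendsto_const_nhds).toFun t (b i)
            = (0 : D ⊗[ℂ] D) := by
          intro i
          show (0 : D) ⊗ₜ[ℂ] (0 : D) = 0
          simp
        rw [Finset.sum_congr rfl (fun i _ => this i)]
        simpa using hν0
      rw [hfun, limsup_const]
    -- amplification: a positive element of `S` forces arbitrarily large elements of `S`
    have hamp : ∀ r ∈ S, 0 < r → ∀ K : ℝ, ∃ r' ∈ S, K ≤ r' := by
      rintro r ⟨φ, ψ, n, a, b, hc, hr⟩ hrpos K
      set f : ℝ → ℝ := fun t => ν (∑ i, φ.toFun t (a i) ⊗ₜ[ℂ] ψ.toFun t (b i)) with hfdef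
      -- frequently `r/2 < f`
      have hfreq : ∃ᶠ t in atTop, r / 2 < f t := by
        by_contra hcon
        have hev : ∀ᶠ t in atTop, f t ≤ r / 2 := by
          have := not_frequently.mp hcon
          simpa using this
        have hbb : BddBelow {x : ℝ | ∀ᶠ t in atTop, f t ≤ x} := by
          refine ⟨0, fun x hx => ?_⟩
          obtain ⟨t, htx⟩ := hx.exists
          exact le_trans (hν_nonneg _) htx
        have hls : limsup f atTop ≤ r / 2 := by
          rw [limsup_eq]
          exact csInf_le hbb hev
        rw [← hr] at hls
        linarith
      set Pφ : ℝ → ℝ := fun t => ∑ i, ‖φ.toFun t (a i)‖ with hPφdef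
      set Sψ : ℝ → ℝ := fun t => ∑ i, ‖ψ.toFun t (b i)‖ with hSψdef
      have hPφ0 : Tendsto Pφ atTop (nhds 0) := by
        have := tendsto_finset_sum (Finset.univ : Finset (Fin n))
          (fun i _ => (htriv φ (a i)).norm)
        simpa using this
      have hPφnn : ∀ t, 0 ≤ Pφ t := fun t => Finset.sum_nonneg fun i _ => norm_nonneg _
      have hSψnn : ∀ t, 0 ≤ Sψ t := fun t => Finset.sum_nonneg fun i _ => norm_nonneg _
      have hfle : ∀ t, f t ≤ Pφ t * Sψ t := by
        intro t
        calc f t ≤ ∑ i, ‖φ.toFun t (a i)‖ * ‖ψ.toFun t (b i)‖ := hνsum n _ _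
          _ ≤ ∑ i, ‖φ.toFun t (a i)‖ * Sψ t := by
              refine Finset.sum_le_sum (fun i _ => ?_)
              refine mul_le_mul_of_nonneg_left ?_ (norm_nonneg _)
              exact Finset.single_le_sum (f := fun j => ‖ψ.toFun t (b j)‖)
                (fun j _ => norm_nonneg _) (Finset.mem_univ i)
          _ = Pφ t * Sψ t := by rw [← Finset.sum_mul]
      -- `Sψ` is unbounded along arbitrarily large times
      have hSun : ∀ C T : ℝ, ∃ t, T ≤ t ∧ C ≤ Sψ t := by
        intro C T
        set M : ℝ := max C 1 with hM
        have hM1 : (1 : ℝ) ≤ M := le_max_right _ _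
        have hev : ∀ᶠ t in atTop, Pφ t * (2 * M) < r := by
          have h2 : Tendsto (fun t => Pφ t * (2 * M)) atTop (nhds 0) := by
            simpa using hPφ0.mul_const (2 * M)
          exact h2.eventually_lt_const hrpos
        obtain ⟨t, hT, h1, h2⟩ := frequently_atTop.mp (hfreq.and_eventually hev) T
        refine ⟨t, hT, ?_⟩
        by_contra hC
        push_neg at hC
        have h3 : Sψ t ≤ M := le_trans hC.le (le_max_left _ _)
        have h4 : f t ≤ Pφ t * Sψ t := hfle t
        have h5 : Pφ t * Sψ t ≤ Pφ t * M := mul_le_mul_of_nonneg_left h3 (hPφnn t)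
        have h6 : Pφ t * (2 * M) = 2 * (Pφ t * M) := by ring
        linarith
      have hn : n ≠ 0 := by
        intro h
        obtain ⟨t, -, h1⟩ := hSun 1 0
        rw [hSψdef] at h1
        subst h
        simp at h1
        linarith
      have hnpos : (0 : ℝ) < n := by
        have := Nat.pos_of_ne_zero hn
        exact_mod_cast this
      -- choice of a coordinate carrying the unboundedness
      have hRex : ∃ i₀ : Fin n, ∀ C T : ℝ,
          ∃ t, T ≤ t ∧ C ≤ Sψ t ∧ Sψ t ≤ n * ‖ψ.toFun t (b i₀)‖ := by
        by_contra hcon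
        push_neg at hcon
        choose Cf Tf hf2 using hcon
        set CC : ℝ := ∑ i, max (Cf i) 0 with hCC
        set TT : ℝ := ∑ i, max (Tf i) 0 with hTT
        have hCCi : ∀ i, Cf i ≤ CC := by
          intro i
          calc Cf i ≤ max (Cf i) 0 := le_max_left _ _
            _ ≤ ∑ j, max (Cf j) 0 := Finset.single_le_sum (f := fun j => max (Cf j) 0)
                (fun j _ => le_max_right _ _) (Finset.mem_univ i)
        have hTTi : ∀ i, Tf i ≤ TT := by
          intro i
          calc Tf i ≤ max (Tf i) 0 := le_max_left _ _
            _ ≤ ∑ j, max (Tf j) 0 := Finset.single_le_sum (f := fun j => max (Tf j) 0)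
                (fun j _ => le_max_right _ _) (Finset.mem_univ i)
        obtain ⟨t, ht, hCt⟩ := hSun (CC + 1) TT
        have hne : (Finset.univ : Finset (Fin n)).Nonempty := by
          rw [Finset.univ_nonempty_iff]
          exact Fin.pos_iff_nonempty.mp (Nat.pos_of_ne_zero hn)
        have hex : ∃ i ∈ (Finset.univ : Finset (Fin n)), Sψ t / n ≤ ‖ψ.toFun t (b i)‖ := by
          apply Finset.exists_le_of_sum_le hne
          have hsum : ∑ _i : Fin n, Sψ t / n = Sψ t := by
            rw [Finset.sum_const, Finset.card_univ, Fintype.card_fin, nsmul_eq_mul]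
            field_simp
          rw [hsum]
        obtain ⟨i, -, hi⟩ := hex
        have h1 : Sψ t ≤ n * ‖ψ.toFun t (b i)‖ := by
          rw [div_le_iff₀ hnpos] at hi
          linarith
        have h2 := hf2 i t (le_trans (hTTi i) ht) (by linarith [hCCi i])
        exact absurd h1 (not_le.mpr h2)
      obtain ⟨i₀, hR⟩ := hRex
      -- a norm-one element of `D`
      obtain ⟨t₀, -, ht₀1, ht₀2⟩ := hR 1 0
      have hpos : 0 < ‖ψ.toFun t₀ (b i₀)‖ := by
        by_contra hle
        push_neg at hle
        have : ‖ψ.toFun t₀ (b i₀)‖ = 0 := le_antisymm hle (norm_nonneg _)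
        rw [this, mul_zero] at ht₀2
        linarith
      set u₀ : D := ((‖ψ.toFun t₀ (b i₀)‖⁻¹ : ℝ) : ℂ) • ψ.toFun t₀ (b i₀) with hu₀
      have hu₀n : ‖u₀‖ = 1 := by
        rw [hu₀, norm_smul, Complex.norm_real, Real.norm_eq_abs,
          abs_of_nonneg (inv_nonneg.mpr (norm_nonneg _))]
        field_simp
      -- the vector `b'` and the path `W`
      set b' : B := ((2 * n : ℕ) : ℂ) • b i₀ with hb'
      set W : ℝ → D := fun t => ψ.toFun t b' + ∑ i, ψ.toFun t (b i) with hW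
      set PW : ℝ → ℝ := fun t => ‖W t‖ with hPW
      have hWcont : Continuous W :=
        (ψ.cont b').add (continuous_finset_sum _ fun i _ => ψ.cont (b i))
      have hψ0 : Tendsto (fun t => ψ.toFun t 0) atTop (nhds 0) := by
        have h := ψ.lin_lim 0 0 1
        have h' : Tendsto (fun t => -(ψ.toFun t 0)) atTop (nhds 0) := by
          simpa using h
        simpa using h'.neg
      have hE : Tendsto
          (fun t => ψ.toFun t b' - ((2 * n : ℕ) : ℂ) • ψ.toFun t (b i₀)) atTop (nhds 0) := by
        have h := (ψ.lin_lim 0 (b i₀) ((2 * n : ℕ) : ℂ)).add hψ0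
        have heq : (fun t => (ψ.toFun t (0 + ((2 * n : ℕ) : ℂ) • b i₀) - ψ.toFun t 0
            - ((2 * n : ℕ) : ℂ) • ψ.toFun t (b i₀)) + ψ.toFun t 0)
            = fun t => ψ.toFun t b' - ((2 * n : ℕ) : ℂ) • ψ.toFun t (b i₀) := by
          funext t
          rw [zero_add, ← hb']
          abel
        rw [heq] at h
        simpa using h
      -- `PW` is unbounded along arbitrarily large times
      have hPWu : ∀ C T : ℝ, ∃ t, T ≤ t ∧ C ≤ PW t := by
        intro C T
        have hEev : ∀ᶠ t in atTop,
            ‖ψ.toFun t b' - ((2 * n : ℕ) : ℂ) • ψ.toFun t (b i₀)‖ < 1 := by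
          have h := hE.norm
          have h' : Tendsto
              (fun t => ‖ψ.toFun t b' - ((2 * n : ℕ) : ℂ) • ψ.toFun t (b i₀)‖)
              atTop (nhds 0) := by simpa using h
          exact h'.eventually_lt_const one_pos
        obtain ⟨T', hT'⟩ := eventually_atTop.mp hEev
        obtain ⟨t, ht, h1, h2⟩ := hR (C + 2) (max T T')
        refine ⟨t, le_trans (le_max_left _ _) ht, ?_⟩
        have hEt : ‖ψ.toFun t b' - ((2 * n : ℕ) : ℂ) • ψ.toFun t (b i₀)‖ ≤ 1 :=
          (hT' t (le_trans (le_max_right _ _) ht)).le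
        have hcn : ‖(((2 * n : ℕ) : ℂ)) • ψ.toFun t (b i₀)‖
            = (2 * n : ℝ) * ‖ψ.toFun t (b i₀)‖ := by
          rw [norm_smul, Complex.norm_natCast]
          push_cast
          ring
        have htri : ‖(((2 * n : ℕ) : ℂ)) • ψ.toFun t (b i₀)‖
            ≤ ‖ψ.toFun t b'‖ + ‖ψ.toFun t b' - ((2 * n : ℕ) : ℂ) • ψ.toFun t (b i₀)‖ := by
          have := norm_sub_le (ψ.toFun t b')
            (ψ.toFun t b' - ((2 * n : ℕ) : ℂ) • ψ.toFun t (b i₀))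
          simpa using this
        have hb'big : (2 * n : ℝ) * ‖ψ.toFun t (b i₀)‖ - 1 ≤ ‖ψ.toFun t b'‖ := by
          rw [hcn] at htri
          linarith
        have hSig : ‖∑ i, ψ.toFun t (b i)‖ ≤ Sψ t := norm_sum_le _ _
        have hWt : ‖ψ.toFun t b'‖ - ‖∑ i, ψ.toFun t (b i)‖ ≤ PW t := by
          have hPWt : PW t = ‖ψ.toFun t b' + ∑ i, ψ.toFun t (b i)‖ := rfl
          have htr : ‖ψ.toFun t b'‖
              ≤ ‖ψ.toFun t b' + ∑ i, ψ.toFun t (b i)‖ + ‖∑ i, ψ.toFun t (b i)‖ := by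
            have h0 := norm_add_le (ψ.toFun t b' + ∑ i, ψ.toFun t (b i))
              (-(∑ i, ψ.toFun t (b i)))
            simpa using h0
          linarith
        -- 2n‖ψ b i₀‖ ≥ 2 Sψ t, so PW t ≥ Sψ t - 2 ≥ C
        have h2' : 2 * Sψ t ≤ 2 * n * ‖ψ.toFun t (b i₀)‖ := by nlinarith
        nlinarith
      -- the interpolating minorant and the slowly vanishing path
      obtain ⟨ρ, hρcont, hρ1, hρtop, hρhit⟩ := exists_interp PW hPWu
      set K' : ℝ := max K 1 with hK'
      have hK'pos : (0 : ℝ) < K' := lt_of_lt_of_le one_pos (le_max_right _ _)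
      have hmaxpos : ∀ t, 0 < max (PW t) (ρ t) :=
        fun t => lt_of_lt_of_le one_pos (le_trans (hρ1 t) (le_max_right _ _))
      set δ : ℝ → ℝ := fun t => K' / max (PW t) (ρ t) with hδdef
      have hδnn : ∀ t, 0 ≤ δ t := fun t => div_nonneg hK'pos.le (hmaxpos t).le
      have hδcont : Continuous δ :=
        continuous_const.div (hWcont.norm.max hρcont) (fun t => (hmaxpos t).ne')
      have hδ0 : Tendsto δ atTop (nhds 0) := by
        have hup : Tendsto (fun t => K' / ρ t) atTop (nhds 0) :=
          tendsto_const_nhds.div_atTop hρtop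
        refine tendsto_of_tendsto_of_tendsto_of_le_of_le tendsto_const_nhds hup hδnn ?_
        intro t
        exact div_le_div_of_nonneg_left hK'pos.le
          (lt_of_lt_of_le one_pos (hρ1 t)) (le_max_right _ _)
      set d : ℝ → D := fun t => ((δ t : ℝ) : ℂ) • u₀ with hddef
      have hdcont : Continuous d :=
        (Complex.continuous_ofReal.comp hδcont).smul continuous_const
      have hd0 : Tendsto d atTop (nhds 0) := by
        have h1 : Tendsto (fun t => ((δ t : ℝ) : ℂ)) atTop (nhds 0) := by
          have := (Complex.continuous_ofReal.tendsto 0).comp hδ0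
          simpa [Function.comp_def] using this
        have := h1.smul_const u₀
        rw [zero_smul] at this
        exact this
      have hdn : ∀ t, ‖d t‖ = δ t := by
        intro t
        rw [hddef]
        simp only []
        rw [norm_smul, Complex.norm_real, Real.norm_eq_abs, abs_of_nonneg (hδnn t), hu₀n,
          mul_one]
      -- the new witnesses
      set φ' : AsympHom A D := constAH A d hdcont hd0 with hφ'
      set a' : Fin (n + 1) → A := Fin.cons 0 a with ha'
      set b'' : Fin (n + 1) → B := Fin.cons b' b with hb''
      have hc' : c = ∑ i, a' i ⊗ₜ[ℂ] b'' i := by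
        rw [Fin.sum_univ_succ (f := fun i => a' i ⊗ₜ[ℂ] b'' i)]
        simp only [ha', hb'', Fin.cons_zero, Fin.cons_succ, TensorProduct.zero_tmul, zero_add]
        exact hc
      have hWsum : ∀ t, W t = ∑ i, ψ.toFun t (b'' i) := by
        intro t
        rw [Fin.sum_univ_succ (f := fun i => ψ.toFun t (b'' i))]
        simp only [hb'', Fin.cons_zero, Fin.cons_succ]
        rfl
      have hfW : ∀ t, ν (∑ i, φ'.toFun t (a' i) ⊗ₜ[ℂ] ψ.toFun t (b'' i)) = δ t * PW t := by
        intro t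
        have h1 : ∑ i, φ'.toFun t (a' i) ⊗ₜ[ℂ] ψ.toFun t (b'' i)
            = d t ⊗ₜ[ℂ] W t := by
          have h2 : ∀ i : Fin (n + 1), φ'.toFun t (a' i) = d t := fun i => rfl
          rw [hWsum t, TensorProduct.tmul_sum]
          exact Finset.sum_congr rfl (fun i _ => by rw [h2 i])
        rw [h1, hν_cross, hdn t, hPW]
      have hbound : ∀ t, δ t * PW t ≤ K' := by
        intro t
        have h1 : PW t ≤ max (PW t) (ρ t) := le_max_left _ _
        calc δ t * PW t ≤ δ t * max (PW t) (ρ t) :=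
              mul_le_mul_of_nonneg_left h1 (hδnn t)
          _ = K' := by rw [hδdef]; exact div_mul_cancel₀ _ (hmaxpos t).ne'
      have hhitK : ∀ T, ∃ t, T ≤ t ∧ K' ≤ δ t * PW t := by
        intro T
        obtain ⟨t, hT, hle⟩ := hρhit T
        refine ⟨t, hT, ?_⟩
        have hmx : max (PW t) (ρ t) = PW t := max_eq_left hle
        have hPWpos : (0 : ℝ) < PW t := lt_of_lt_of_le one_pos (le_trans (hρ1 t) hle)
        rw [hδdef]
        simp only [hmx]
        rw [div_mul_cancel₀ _ hPWpos.ne']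
      have hbdd' : IsBoundedUnder (· ≤ ·) atTop
          (fun t => ν (∑ i, φ'.toFun t (a' i) ⊗ₜ[ℂ] ψ.toFun t (b'' i))) := by
        refine ⟨K', ?_⟩
        rw [eventually_map]
        filter_upwards with t
        rw [hfW t]
        exact hbound t
      have hfreq' : ∃ᶠ t in atTop,
          K' ≤ ν (∑ i, φ'.toFun t (a' i) ⊗ₜ[ℂ] ψ.toFun t (b'' i)) := by
        rw [frequently_atTop]
        intro T
        obtain ⟨t, hT, hge⟩ := hhitK T
        exact ⟨t, hT, by rw [hfW t]; exact hge⟩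
      refine ⟨limsup (fun t => ν (∑ i, φ'.toFun t (a' i) ⊗ₜ[ℂ] ψ.toFun t (b'' i))) atTop,
        ⟨φ', ψ, n + 1, a', b'', hc', rfl⟩, ?_⟩
      have hKle := le_limsup_of_frequently_le hfreq' hbdd'
      exact le_trans (le_max_left K 1) hKle
    by_cases hbdd : BddAbove S
    · obtain ⟨M, hM⟩ := hbdd
      have hle : ∀ r ∈ S, r ≤ 0 := by
        intro r hrS
        by_contra hpos
        push_neg at hpos
        obtain ⟨r', hr'S, hKr'⟩ := hamp r hrS hpos (M + 1)
        have := hM hr'S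
        linarith
      exact le_antisymm (csSup_le ⟨0, h0S⟩ hle) (le_csSup ⟨M, hM⟩ h0S)
    · exact Real.sSup_of_not_bddAbove hbdd
  refine ⟨key, fun c => ?_⟩
  rw [key c]
  exact max_eq_left (hpmin_nonneg c)
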